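/- Let V(t) = t² − 3t³ + 7t⁴ − 10t⁵ + 14t⁶ − 14t⁷ + 13t⁸ − 11t⁹ + 7t¹⁰ − 4t¹¹ + t¹² in the Laurent polynomial ring ℤ[t^{±1}]. Then for every prime r ≥ 5, the element V(t) − V(t⁻¹) does not lie in the ideal of ℤ[t^{±1}] generated by r and t^r − 1 (so the knot 10_{101}, whose Jones polynomial equals V, fails the periodicity congruence V(t) ≡ V(t⁻¹) mod (r, t^r − 1) for all primes r ≥ 5). -/

import Mathlib

open LaurentPolynomial

/-- The Jones polynomial of the knot `10_{101}` in `ℤ[t^{±1}]`. -/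
noncomputable def V10101 : LaurentPolynomial ℤ :=
  T 2 - 3 * T 3 + 7 * T 4 - 10 * T 5 + 14 * T 6 - 14 * T 7 + 13 * T 8
    - 11 * T 9 + 7 * T 10 - 4 * T 11 + T 12

section Aux
variable (r : ℕ)

noncomputable def phiAux : LaurentPolynomial ℤ →ₐ[ℤ] AddMonoidAlgebra (ZMod r) (ZMod r) :=
  AddMonoidAlgebra.lift ℤ _ ℤ
    ((AddMonoidAlgebra.of (ZMod r) (ZMod r)).comp
      (AddMonoidHom.toMultiplicative (Int.castAddHom (ZMod r))))

theorem phiAux_T (n : ℤ) :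
    phiAux r (T n) = AddMonoidAlgebra.single ((n : ZMod r)) (1 : ZMod r) := by
  rw [phiAux, T, AddMonoidAlgebra.lift_single, one_smul]
  rfl

end Aux

example (r : ℕ) : phiAux r ((r : LaurentPolynomial ℤ)) = 0 := by
  rw [map_natCast]
  have : ((r : ZMod r)) = 0 := ZMod.natCast_self r
  rw [← map_natCast (algebraMap (ZMod r) (AddMonoidAlgebra (ZMod r) (ZMod r))) r, this, map_zero]

example (r : ℕ) : phiAux r (T (r:ℤ) - 1) = 0 := by
  rw [map_sub, phiAux_T, map_one]
  norm_cast
  rw [ZMod.natCast_self]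
  rw [AddMonoidAlgebra.one_def]
  simp

theorem phiAux_cT (r : ℕ) (c n : ℤ) :
    phiAux r ((c : LaurentPolynomial ℤ) * T n) =
      AddMonoidAlgebra.single ((n : ZMod r)) ((c : ZMod r)) := by
  rw [← zsmul_eq_mul, map_zsmul, phiAux_T, AddMonoidAlgebra.smul_single]
  norm_num

theorem V_eq : V10101 = ((1:ℤ) : LaurentPolynomial ℤ) * T 2 + ((-3:ℤ) : LaurentPolynomial ℤ) * T 3
    + ((7:ℤ) : LaurentPolynomial ℤ) * T 4 + ((-10:ℤ) : LaurentPolynomial ℤ) * T 5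
    + ((14:ℤ) : LaurentPolynomial ℤ) * T 6 + ((-14:ℤ) : LaurentPolynomial ℤ) * T 7
    + ((13:ℤ) : LaurentPolynomial ℤ) * T 8 + ((-11:ℤ) : LaurentPolynomial ℤ) * T 9
    + ((7:ℤ) : LaurentPolynomial ℤ) * T 10 + ((-4:ℤ) : LaurentPolynomial ℤ) * T 11
    + ((1:ℤ) : LaurentPolynomial ℤ) * T 12 := by
  rw [V10101]
  push_cast
  ring

theorem stmt_5 (r : ℕ) (hr : r.Prime) (hr5 : 5 ≤ r) :
    V10101 - invert V10101 ∉
      Ideal.span ({(r : LaurentPolynomial ℤ), T (r : ℤ) - 1} :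
        Set (LaurentPolynomial ℤ)) := by
  intro hmem
  obtain ⟨a, b, hab⟩ := Ideal.mem_span_pair.mp hmem
  have hr0 : phiAux r ((r : LaurentPolynomial ℤ)) = 0 := by
    rw [map_natCast]
    rw [← map_natCast (algebraMap (ZMod r) (AddMonoidAlgebra (ZMod r) (ZMod r))) r,
      ZMod.natCast_self, map_zero]
  have ht0 : phiAux r (T (r:ℤ) - 1) = 0 := by
    rw [map_sub, phiAux_T, map_one]
    norm_cast
    rw [ZMod.natCast_self, AddMonoidAlgebra.one_def]
    simp
  have hzero : phiAux r (V10101 - invert V10101) = 0 := by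
    rw [← hab, map_add, map_mul, map_mul, hr0, ht0, mul_zero, mul_zero, add_zero]
  have hInv : invert V10101 = ((1:ℤ) : LaurentPolynomial ℤ) * T (-2)
      + ((-3:ℤ) : LaurentPolynomial ℤ) * T (-3)
      + ((7:ℤ) : LaurentPolynomial ℤ) * T (-4) + ((-10:ℤ) : LaurentPolynomial ℤ) * T (-5)
      + ((14:ℤ) : LaurentPolynomial ℤ) * T (-6) + ((-14:ℤ) : LaurentPolynomial ℤ) * T (-7)
      + ((13:ℤ) : LaurentPolynomial ℤ) * T (-8) + ((-11:ℤ) : LaurentPolynomial ℤ) * T (-9)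
      + ((7:ℤ) : LaurentPolynomial ℤ) * T (-10) + ((-4:ℤ) : LaurentPolynomial ℤ) * T (-11)
      + ((1:ℤ) : LaurentPolynomial ℤ) * T (-12) := by
    rw [V_eq]
    simp only [map_add, map_mul, invert_T, map_intCast]
  rw [hInv, V_eq, map_sub] at hzero
  simp only [map_add, phiAux_cT] at hzero
  have hzero' : (AddMonoidAlgebra.single (((2:ℤ) : ZMod r)) (((1:ℤ) : ZMod r)) + AddMonoidAlgebra.single (((3:ℤ) : ZMod r)) (((-3:ℤ) : ZMod r)) + AddMonoidAlgebra.single (((4:ℤ) : ZMod r)) (((7:ℤ) : ZMod r)) + AddMonoidAlgebra.single (((5:ℤ) : ZMod r)) (((-10:ℤ) : ZMod r)) + AddMonoidAlgebra.single (((6:ℤ) : ZMod r)) (((14:ℤ) : ZMod r)) + AddMonoidAlgebra.single (((7:ℤ) : ZMod r)) (((-14:ℤ) : ZMod r)) + AddMonoidAlgebra.single (((8:ℤ) : ZMod r)) (((13:ℤ) : ZMod r)) + AddMonoidAlgebra.single (((9:ℤ) : ZMod r)) (((-11:ℤ) : ZMod r)) + AddMonoidAlgebra.single (((10:ℤ)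 : ZMod r)) (((7:ℤ) : ZMod r)) + AddMonoidAlgebra.single (((11:ℤ) : ZMod r)) (((-4:ℤ) : ZMod r)) + AddMonoidAlgebra.single (((12:ℤ) : ZMod r)) (((1:ℤ) : ZMod r)))
      - (AddMonoidAlgebra.single (((-2:ℤ) : ZMod r)) (((1:ℤ) : ZMod r)) + AddMonoidAlgebra.single (((-3:ℤ) : ZMod r)) (((-3:ℤ) : ZMod r)) + AddMonoidAlgebra.single (((-4:ℤ) : ZMod r)) (((7:ℤ) : ZMod r)) + AddMonoidAlgebra.single (((-5:ℤ) : ZMod r)) (((-10:ℤ) : ZMod r)) + AddMonoidAlgebra.single (((-6:ℤ) : ZMod r)) (((14:ℤ) : ZMod r)) + AddMonoidAlgebra.single (((-7:ℤ) : ZMod r)) (((-14:ℤ) : ZMod r)) + AddMonoidAlgebra.single (((-8:ℤ) : ZMod r)) (((13:ℤ) : ZMod r)) + AddMonoidAlgebra.single (((-9:ℤ) : ZMod r)) (((-11:ℤ) : ZMod r)) + AddMonoidAlgebra.single (((-10:ℤ) : ZMod r)) (((7:ℤ) : ZMod r)) + AddMonoidAlgebra.single (((-11:ℤ) : ZMod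 r)) (((-4:ℤ) : ZMod r)) + AddMonoidAlgebra.single (((-12:ℤ) : ZMod r)) (((1:ℤ) : ZMod r))) = (0 : AddMonoidAlgebra (ZMod r) (ZMod r)) := hzero
  have h2 := congrArg (fun f => f.coeff (2 : ZMod r)) hzero'
  simp only [AddMonoidAlgebra.coeff_sub, AddMonoidAlgebra.coeff_add,
    AddMonoidAlgebra.coeff_single, AddMonoidAlgebra.coeff_zero, Finsupp.sub_apply, Finsupp.add_apply, Finsupp.single_apply, Finsupp.coe_zero,
    Pi.zero_apply] at h2
  rcases lt_or_ge r 17 with hlt | hge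
  · interval_cases r <;> revert hr h2 <;> decide
  · have e2 : (((2:ℤ) : ZMod r)) = 2 := by norm_cast
    have hne : ∀ n : ℤ, n ≠ 2 → (n - 2).natAbs < 17 → ((n : ZMod r)) ≠ 2 := by
      intro n hn habs h
      rw [show (2 : ZMod r) = ((2:ℤ) : ZMod r) from by norm_cast, ← sub_eq_zero,
        ← Int.cast_sub, ZMod.intCast_zmod_eq_zero_iff_dvd] at h
      have h0 : n - 2 = 0 := by
        refine Int.eq_zero_of_dvd_of_natAbs_lt_natAbs h ?_
        simpa using lt_of_lt_of_le habs hge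
      omega
    simp only [e2, eq_self_iff_true, if_true,
      hne (3 : ℤ) (by norm_num) (by norm_num),
      hne (4 : ℤ) (by norm_num) (by norm_num),
      hne (5 : ℤ) (by norm_num) (by norm_num),
      hne (6 : ℤ) (by norm_num) (by norm_num),
      hne (7 : ℤ) (by norm_num) (by norm_num),
      hne (8 : ℤ) (by norm_num) (by norm_num),
      hne (9 : ℤ) (by norm_num) (by norm_num),
      hne (10 : ℤ) (by norm_num) (by norm_num),
      hne (11 : ℤ) (by norm_num) (by norm_num),
      hne (12 : ℤ) (by norm_num) (by norm_num),
      hne (-2 : ℤ) (by norm_num) (by norm_num),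
      hne (-3 : ℤ) (by norm_num) (by norm_num),
      hne (-4 : ℤ) (by norm_num) (by norm_num),
      hne (-5 : ℤ) (by norm_num) (by norm_num),
      hne (-6 : ℤ) (by norm_num) (by norm_num),
      hne (-7 : ℤ) (by norm_num) (by norm_num),
      hne (-8 : ℤ) (by norm_num) (by norm_num),
      hne (-9 : ℤ) (by norm_num) (by norm_num),
      hne (-10 : ℤ) (by norm_num) (by norm_num),
      hne (-11 : ℤ) (by norm_num) (by norm_num),
      hne (-12 : ℤ) (by norm_num) (by norm_num),
      ] at h2
    simp only [Int.cast_one, sub_zero, add_zero, zero_add] at h2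
    haveI : Fact (1 < r) := ⟨by omega⟩
    simp at h2
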